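/- Mirror pattern: for t ≥ r ≥ 1, placing broadcast vertices at all points [tx + (2t−r)y]α₁ + [(2t−r)x + (t−r)y]α₂ for x, y ∈ ℤ also yields an efficient (t,r) broadcast dominating set of the infinite triangular grid; this pattern is the reflection of the pattern {[(2t−r)x+(t−r)y]α₁ + [tx+(2t−r)y]α₂} across the line through the origin and α₁ + α₂. -/

import Mathlib

/-- Hexagonal (triangular-lattice) graph distance on `ℤ × ℤ`, where `(a, b)`
represents the vertex `a•α₁ + b•α₂` of the infinite triangular grid `T_∞`. -/
def hexDist (u v : ℤ × ℤ) : ℕ :=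
  if 0 ≤ (u.1 - v.1) * (u.2 - v.2) then max (u.1 - v.1).natAbs (u.2 - v.2).natAbs
  else (u.1 - v.1).natAbs + (u.2 - v.2).natAbs

/-- A finite box of lattice points containing every vertex within hex distance
`t` of `u`. -/
noncomputable def ballBox (t : ℕ) (u : ℤ × ℤ) : Finset (ℤ × ℤ) :=
  Finset.Icc (u.1 - t, u.2 - t) (u.1 + t, u.2 + t)

open Classical in
/-- Reception at `u` from a (possibly infinite) set `S` of broadcast vertices of
strength `t`: the sum of `t − d(u,v)` over all `v ∈ S` with `d(u,v) < t`
(vertices with `d(u,v) ≥ t` contribute `0` by truncated subtraction, and all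
contributing vertices lie in the box `ballBox t u`). -/
noncomputable def receptionSet (S : Set (ℤ × ℤ)) (t : ℕ) (u : ℤ × ℤ) : ℕ :=
  ∑ v ∈ ballBox t u, if v ∈ S then t - hexDist u v else 0

/-- The broadcast pattern of Theorem 4.2: dominators at
`[(2t−r)x + (t−r)y]α₁ + [tx + (2t−r)y]α₂` for `x, y ∈ ℤ`. -/
def pattern (t r : ℕ) : Set (ℤ × ℤ) :=
  {p | ∃ x y : ℤ, p = ((2 * (t : ℤ) - r) * x + ((t : ℤ) - r) * y,
                       (t : ℤ) * x + (2 * (t : ℤ) - r) * y)}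

/-- The mirror broadcast pattern: dominators at
`[tx + (2t−r)y]α₁ + [(2t−r)x + (t−r)y]α₂` for `x, y ∈ ℤ`. -/
def patternMirror (t r : ℕ) : Set (ℤ × ℤ) :=
  {p | ∃ x y : ℤ, p = ((t : ℤ) * x + (2 * (t : ℤ) - r) * y,
                       (2 * (t : ℤ) - r) * x + ((t : ℤ) - r) * y)}

/-- `S` is an efficient `(t,r)` broadcast dominating set of `T_∞`: every vertex
has reception at least `r`; vertices at distance `≥ t−r` from every dominator
have reception exactly `r`; and a vertex within distance `< t−r` of some
dominator is within that distance of exactly one dominator `v` and has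
reception exactly `t − d(u,v)`. -/
def IsEfficientBroadcast (S : Set (ℤ × ℤ)) (t r : ℕ) : Prop :=
  (∀ u : ℤ × ℤ, r ≤ receptionSet S t u) ∧
  (∀ u : ℤ × ℤ, (∀ v ∈ S, t - r ≤ hexDist u v) → receptionSet S t u = r) ∧
  (∀ u v : ℤ × ℤ, v ∈ S → hexDist u v < t - r →
    receptionSet S t u = t - hexDist u v ∧
    ∀ w ∈ S, hexDist u w < t - r → w = v)

set_option maxHeartbeats 2000000

def hd (a b : ℤ) : ℕ := max (max a.natAbs b.natAbs) (a - b).natAbs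

theorem core_all (t r : ℕ) (a b : ℤ) (hr : 1 ≤ r) (hrt : r ≤ t)
    (ha1 : 0 ≤ a) (ha2 : a ≤ 3*(t:ℤ) - r - 1)
    (hb1 : 0 ≤ b) (hb2 : b ≤ 3*(t:ℤ) - 2*r - 1)
    (hab1 : (r:ℤ) - t ≤ a - b) (hab2 : a - b ≤ (t:ℤ) - 1) :
    r ≤ (t - hd a b) + (t - hd (a - t) (b - (2*t - r)))
      + (t - hd (a - (2*t - r)) (b - (t - r)))
      + (t - hd (a - (3*t - r)) (b - (3*t - 2*r))) ∧
    (t - r ≤ hd a b → t - r ≤ hd (a - t) (b - (2*t - r)) →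
      t - r ≤ hd (a - (2*t - r)) (b - (t - r)) →
      t - r ≤ hd (a - (3*t - r)) (b - (3*t - 2*r)) →
      (t - hd a b) + (t - hd (a - t) (b - (2*t - r)))
      + (t - hd (a - (2*t - r)) (b - (t - r)))
      + (t - hd (a - (3*t - r)) (b - (3*t - 2*r))) = r) ∧
    (hd a b < t - r →
      (t - hd a b) + (t - hd (a - t) (b - (2*t - r)))
      + (t - hd (a - (2*t - r)) (b - (t - r)))
      + (t - hd (a - (3*t - r)) (b - (3*t - 2*r))) = t - hd a b ∧
      t - r ≤ hd (a - t) (b - (2*t - r)) ∧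
      t - r ≤ hd (a - (2*t - r)) (b - (t - r)) ∧
      t - r ≤ hd (a - (3*t - r)) (b - (3*t - 2*r))) ∧
    (hd (a - t) (b - (2*t - r)) < t - r →
      (t - hd a b) + (t - hd (a - t) (b - (2*t - r)))
      + (t - hd (a - (2*t - r)) (b - (t - r)))
      + (t - hd (a - (3*t - r)) (b - (3*t - 2*r))) = t - hd (a - t) (b - (2*t - r)) ∧
      t - r ≤ hd a b ∧
      t - r ≤ hd (a - (2*t - r)) (b - (t - r)) ∧
      t - r ≤ hd (a - (3*t - r)) (b - (3*t - 2*r))) ∧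
    (hd (a - (2*t - r)) (b - (t - r)) < t - r →
      (t - hd a b) + (t - hd (a - t) (b - (2*t - r)))
      + (t - hd (a - (2*t - r)) (b - (t - r)))
      + (t - hd (a - (3*t - r)) (b - (3*t - 2*r))) = t - hd (a - (2*t - r)) (b - (t - r)) ∧
      t - r ≤ hd a b ∧
      t - r ≤ hd (a - t) (b - (2*t - r)) ∧
      t - r ≤ hd (a - (3*t - r)) (b - (3*t - 2*r))) ∧
    (hd (a - (3*t - r)) (b - (3*t - 2*r)) < t - r →
      (t - hd a b) + (t - hd (a - t) (b - (2*t - r)))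
      + (t - hd (a - (2*t - r)) (b - (t - r)))
      + (t - hd (a - (3*t - r)) (b - (3*t - 2*r))) = t - hd (a - (3*t - r)) (b - (3*t - 2*r)) ∧
      t - r ≤ hd a b ∧
      t - r ≤ hd (a - t) (b - (2*t - r)) ∧
      t - r ≤ hd (a - (2*t - r)) (b - (t - r))) := by
  have c0 : (((hd a b : ℤ) = a ∨ (hd a b : ℤ) = b) ∧ a ≤ (hd a b : ℤ) ∧ b ≤ (hd a b : ℤ)) := by
    unfold hd; omega
  have c1 : (((hd (a - t) (b - (2*t - r)) : ℤ) = (a-t).natAbs ∨ (hd (a - t) (b - (2*t - r)) : ℤ) = (b-(2*t-r)).natAbs ∨ (hd (a - t) (b - (2*t - r)) : ℤ) = a - b + t - r)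
      ∧ ((a-t).natAbs : ℤ) ≤ (hd (a - t) (b - (2*t - r)) : ℤ) ∧ ((b-(2*t-r)).natAbs : ℤ) ≤ (hd (a - t) (b - (2*t - r)) : ℤ) ∧ a - b + t - r ≤ (hd (a - t) (b - (2*t - r)) : ℤ)) := by
    unfold hd; omega
  have c2 : (((hd (a - (2*t - r)) (b - (t - r)) : ℤ) = (a-(2*t-r)).natAbs ∨ (hd (a - (2*t - r)) (b - (t - r)) : ℤ) = (b-(t-r)).natAbs ∨ (hd (a - (2*t - r)) (b - (t - r)) : ℤ) = t - a + b)
      ∧ ((a-(2*t-r)).natAbs : ℤ) ≤ (hd (a - (2*t - r)) (b - (t - r)) : ℤ) ∧ ((b-(t-r)).natAbs : ℤ) ≤ (hd (a - (2*t - r)) (b - (t - r)) : ℤ) ∧ (t:ℤ) - a + b ≤ (hd (a - (2*t - r)) (b - (t - r)) : ℤ)) := by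
    unfold hd; omega
  have c3 : (((hd (a - (3*t - r)) (b - (3*t - 2*r)) : ℤ) = 3*t - r - a ∨ (hd (a - (3*t - r)) (b - (3*t - 2*r)) : ℤ) = 3*t - 2*r - b)
      ∧ 3*(t:ℤ) - r - a ≤ (hd (a - (3*t - r)) (b - (3*t - 2*r)) : ℤ) ∧ 3*(t:ℤ) - 2*r - b ≤ (hd (a - (3*t - r)) (b - (3*t - 2*r)) : ℤ)) := by
    unfold hd; omega
  omega

def pm (t r : ℕ) (x y : ℤ) : ℤ × ℤ :=
  ((t : ℤ) * x + (2 * (t : ℤ) - r) * y, (2 * (t : ℤ) - r) * x + ((t : ℤ) - r) * y)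

lemma pm_mem (t r : ℕ) (x y : ℤ) : pm t r x y ∈ patternMirror t r := ⟨x, y, rfl⟩

def Dl (t r : ℕ) : ℤ := 3 * (t : ℤ) * t - 3 * t * r + r * r
def phiF (t r : ℕ) (u : ℤ × ℤ) : ℤ := (2 * (t : ℤ) - r) * u.2 - ((t : ℤ) - r) * u.1
def psiF (t r : ℕ) (u : ℤ × ℤ) : ℤ := (2 * (t : ℤ) - r) * u.1 - (t : ℤ) * u.2
def X0 (t r : ℕ) (u : ℤ × ℤ) : ℤ := phiF t r u / Dl t r
def Y0 (t r : ℕ) (u : ℤ × ℤ) : ℤ := psiF t r u / Dl t r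

lemma hexDist_eq (u v : ℤ × ℤ) : hexDist u v = hd (u.1 - v.1) (u.2 - v.2) := by
  unfold hexDist hd
  split_ifs with h
  · rcases mul_nonneg_iff.mp h with ⟨h1, h2⟩ | ⟨h1, h2⟩ <;> omega
  · rcases mul_neg_iff.mp (not_le.mp h) with ⟨h1, h2⟩ | ⟨h1, h2⟩ <;> omega

lemma Dl_pos (t r : ℕ) (hr : 1 ≤ r) (hrt : r ≤ t) : 1 ≤ Dl t r := by
  have h1 : (1 : ℤ) ≤ (r : ℤ) := by exact_mod_cast hr
  have h2 : (r : ℤ) ≤ (t : ℤ) := by exact_mod_cast hrt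
  unfold Dl; nlinarith

lemma phi_res (t r : ℕ) (hr : 1 ≤ r) (hrt : r ≤ t) (u : ℤ × ℤ) :
    0 ≤ phiF t r u - Dl t r * X0 t r u ∧ phiF t r u - Dl t r * X0 t r u ≤ Dl t r - 1 := by
  have hD := Dl_pos t r hr hrt
  have h : phiF t r u - Dl t r * X0 t r u = phiF t r u % Dl t r := by
    unfold X0; rw [Int.emod_def]
  rw [h]
  constructor
  · exact Int.emod_nonneg _ (by omega)
  · have := Int.emod_lt_of_pos (phiF t r u) (show (0:ℤ) < Dl t r by omega)
    omega

lemma psi_res (t r : ℕ) (hr : 1 ≤ r) (hrt : r ≤ t) (u : ℤ × ℤ) :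
    0 ≤ psiF t r u - Dl t r * Y0 t r u ∧ psiF t r u - Dl t r * Y0 t r u ≤ Dl t r - 1 := by
  have hD := Dl_pos t r hr hrt
  have h : psiF t r u - Dl t r * Y0 t r u = psiF t r u % Dl t r := by
    unfold Y0; rw [Int.emod_def]
  rw [h]
  constructor
  · exact Int.emod_nonneg _ (by omega)
  · have := Int.emod_lt_of_pos (psiF t r u) (show (0:ℤ) < Dl t r by omega)
    omega

lemma pm_inj (t r : ℕ) (hr : 1 ≤ r) (hrt : r ≤ t) {x y x' y' : ℤ}
    (h : pm t r x y = pm t r x' y') : x = x' ∧ y = y' := by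
  have hD := Dl_pos t r hr hrt
  have e1 : (t : ℤ) * x + (2 * (t : ℤ) - r) * y = (t : ℤ) * x' + (2 * (t : ℤ) - r) * y' :=
    congrArg Prod.fst h
  have e2 : (2 * (t : ℤ) - r) * x + ((t : ℤ) - r) * y
      = (2 * (t : ℤ) - r) * x' + ((t : ℤ) - r) * y' := congrArg Prod.snd h
  have hx : Dl t r * (x - x') = 0 := by
    unfold Dl; linear_combination (2 * (t : ℤ) - r) * e2 - ((t : ℤ) - r) * e1
  have hy : Dl t r * (y - y') = 0 := by
    unfold Dl; linear_combination (2 * (t : ℤ) - r) * e1 - (t : ℤ) * e2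
  constructor
  · rcases mul_eq_zero.mp hx with h' | h' <;> omega
  · rcases mul_eq_zero.mp hy with h' | h' <;> omega

lemma near_corner (t r : ℕ) (hr : 1 ≤ r) (hrt : r ≤ t) (u v : ℤ × ℤ)
    (hv : v ∈ patternMirror t r) (hlt : hexDist u v < t) :
    v = pm t r (X0 t r u) (Y0 t r u) ∨ v = pm t r (X0 t r u + 1) (Y0 t r u) ∨
    v = pm t r (X0 t r u) (Y0 t r u + 1) ∨ v = pm t r (X0 t r u + 1) (Y0 t r u + 1) := by
  obtain ⟨x, y, rfl⟩ := hv
  have hD := Dl_pos t r hr hrt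
  have hR : (1 : ℤ) ≤ (r : ℤ) := by exact_mod_cast hr
  have hRT : (r : ℤ) ≤ (t : ℤ) := by exact_mod_cast hrt
  set T := (t : ℤ) with hTdef
  set R := (r : ℤ) with hRdef
  set v : ℤ × ℤ := (T * x + (2 * T - R) * y, (2 * T - R) * x + (T - R) * y) with hvdef
  set w1 := u.1 - v.1 with hw1
  set w2 := u.2 - v.2 with hw2
  rw [hexDist_eq] at hlt
  have hT1 : (1 : ℤ) ≤ T := le_trans hR hRT
  have hw : -(T - 1) ≤ w1 ∧ w1 ≤ T - 1 ∧ -(T - 1) ≤ w2 ∧ w2 ≤ T - 1 ∧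
      -(T - 1) ≤ w1 - w2 ∧ w1 - w2 ≤ T - 1 := by
    unfold hd at hlt; omega
  -- phi equation
  have e1 : phiF t r u = ((T - R) * (w2 - w1) + T * w2) + Dl t r * x := by
    simp only [phiF, Dl, hw1, hw2, hvdef, ← hTdef, ← hRdef]; ring
  have e2 : psiF t r u = (T * (w1 - w2) + (T - R) * w1) + Dl t r * y := by
    simp only [psiF, Dl, hw1, hw2, hvdef, ← hTdef, ← hRdef]; ring
  have hbound : (2 * T - R) * (T - 1) ≤ Dl t r - 1 := by
    unfold Dl; rw [← hTdef, ← hRdef]; nlinarith [sq_nonneg (T - R)]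
  have hphiw : -(Dl t r - 1) ≤ (T - R) * (w2 - w1) + T * w2 ∧
      (T - R) * (w2 - w1) + T * w2 ≤ Dl t r - 1 := by
    have b1 : (T - R) * (w2 - w1) ≤ (T - R) * (T - 1) :=
      mul_le_mul_of_nonneg_left (by omega) (by omega)
    have b2 : (T - R) * (-(T - 1)) ≤ (T - R) * (w2 - w1) :=
      mul_le_mul_of_nonneg_left (by omega) (by omega)
    have b3 : T * w2 ≤ T * (T - 1) := mul_le_mul_of_nonneg_left (by omega) (by omega)
    have b4 : T * (-(T - 1)) ≤ T * w2 := mul_le_mul_of_nonneg_left (by omega) (by omega)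
    have hr1 : (T - R) * (T - 1) + T * (T - 1) = (2 * T - R) * (T - 1) := by ring
    have hr2 : (T - R) * (-(T - 1)) + T * (-(T - 1)) = -((2 * T - R) * (T - 1)) := by ring
    constructor <;> nlinarith
  have hpsiw : -(Dl t r - 1) ≤ T * (w1 - w2) + (T - R) * w1 ∧
      T * (w1 - w2) + (T - R) * w1 ≤ Dl t r - 1 := by
    have b1 : (T - R) * w1 ≤ (T - R) * (T - 1) :=
      mul_le_mul_of_nonneg_left (by omega) (by omega)
    have b2 : (T - R) * (-(T - 1)) ≤ (T - R) * w1 :=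
      mul_le_mul_of_nonneg_left (by omega) (by omega)
    have b3 : T * (w1 - w2) ≤ T * (T - 1) := mul_le_mul_of_nonneg_left (by omega) (by omega)
    have b4 : T * (-(T - 1)) ≤ T * (w1 - w2) := mul_le_mul_of_nonneg_left (by omega) (by omega)
    have hr1 : (T - R) * (T - 1) + T * (T - 1) = (2 * T - R) * (T - 1) := by ring
    constructor <;> nlinarith
  obtain ⟨hF0, hF1⟩ := phi_res t r hr hrt u
  obtain ⟨hP0, hP1⟩ := psi_res t r hr hrt u
  have ex : Dl t r * (x - X0 t r u) = (phiF t r u - Dl t r * X0 t r u)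
      - ((T - R) * (w2 - w1) + T * w2) := by linarith [e1]
  have ey : Dl t r * (y - Y0 t r u) = (psiF t r u - Dl t r * Y0 t r u)
      - (T * (w1 - w2) + (T - R) * w1) := by linarith [e2]
  have hx : x = X0 t r u ∨ x = X0 t r u + 1 := by
    have h1 : ¬ x - X0 t r u ≤ -1 := by
      intro h
      have : Dl t r * (x - X0 t r u) ≤ Dl t r * (-1) :=
        mul_le_mul_of_nonneg_left h (by omega)
      omega
    have h2 : ¬ 2 ≤ x - X0 t r u := by
      intro h
      have : Dl t r * 2 ≤ Dl t r * (x - X0 t r u) :=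
        mul_le_mul_of_nonneg_left h (by omega)
      omega
    omega
  have hy : y = Y0 t r u ∨ y = Y0 t r u + 1 := by
    have h1 : ¬ y - Y0 t r u ≤ -1 := by
      intro h
      have : Dl t r * (y - Y0 t r u) ≤ Dl t r * (-1) :=
        mul_le_mul_of_nonneg_left h (by omega)
      omega
    have h2 : ¬ 2 ≤ y - Y0 t r u := by
      intro h
      have : Dl t r * 2 ≤ Dl t r * (y - Y0 t r u) :=
        mul_le_mul_of_nonneg_left h (by omega)
      omega
    omega
  have hveq : ∀ x' y' : ℤ, x = x' → y = y' → v = pm t r x' y' := by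
    rintro x' y' rfl rfl; simp [pm, hvdef, ← hTdef, ← hRdef]
  rcases hx with hx | hx <;> rcases hy with hy | hy
  · exact Or.inl (hveq _ _ hx hy)
  · exact Or.inr (Or.inr (Or.inl (hveq _ _ hx hy)))
  · exact Or.inr (Or.inl (hveq _ _ hx hy))
  · exact Or.inr (Or.inr (Or.inr (hveq _ _ hx hy)))

lemma coord_bounds (t r : ℕ) (hr : 1 ≤ r) (hrt : r ≤ t) (u : ℤ × ℤ) :
    0 ≤ u.1 - (pm t r (X0 t r u) (Y0 t r u)).1 ∧
    u.1 - (pm t r (X0 t r u) (Y0 t r u)).1 ≤ 3 * (t : ℤ) - r - 1 ∧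
    0 ≤ u.2 - (pm t r (X0 t r u) (Y0 t r u)).2 ∧
    u.2 - (pm t r (X0 t r u) (Y0 t r u)).2 ≤ 3 * (t : ℤ) - 2 * r - 1 ∧
    (r : ℤ) - t ≤ (u.1 - (pm t r (X0 t r u) (Y0 t r u)).1)
      - (u.2 - (pm t r (X0 t r u) (Y0 t r u)).2) ∧
    (u.1 - (pm t r (X0 t r u) (Y0 t r u)).1)
      - (u.2 - (pm t r (X0 t r u) (Y0 t r u)).2) ≤ (t : ℤ) - 1 := by
  have hD := Dl_pos t r hr hrt
  have hDpos : (0 : ℤ) < Dl t r := by omega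
  have hR : (1 : ℤ) ≤ (r : ℤ) := by exact_mod_cast hr
  have hRT : (r : ℤ) ≤ (t : ℤ) := by exact_mod_cast hrt
  obtain ⟨hF0, hF1⟩ := phi_res t r hr hrt u
  obtain ⟨hP0, hP1⟩ := psi_res t r hr hrt u
  set T := (t : ℤ)
  set R := (r : ℤ)
  set F := phiF t r u - Dl t r * X0 t r u with hFdef
  set P := psiF t r u - Dl t r * Y0 t r u with hPdef
  set a := u.1 - (pm t r (X0 t r u) (Y0 t r u)).1 with hadef
  set b := u.2 - (pm t r (X0 t r u) (Y0 t r u)).2 with hbdef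
  have ea : Dl t r * a = T * F + (2 * T - R) * P := by
    simp only [hadef, hFdef, hPdef, pm, phiF, psiF, Dl]; ring
  have eb : Dl t r * b = (2 * T - R) * F + (T - R) * P := by
    simp only [hbdef, hFdef, hPdef, pm, phiF, psiF, Dl]; ring
  have eab : Dl t r * (a - b) = (R - T) * F + T * P := by
    rw [mul_sub, ea, eb]; ring
  have p1 : 0 ≤ T * F := mul_nonneg (by omega) hF0
  have p2 : T * F ≤ T * (Dl t r - 1) := mul_le_mul_of_nonneg_left hF1 (by omega)
  have p3 : 0 ≤ (2 * T - R) * P := mul_nonneg (by omega) hP0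
  have p4 : (2 * T - R) * P ≤ (2 * T - R) * (Dl t r - 1) :=
    mul_le_mul_of_nonneg_left hP1 (by omega)
  have p5 : 0 ≤ (2 * T - R) * F := mul_nonneg (by omega) hF0
  have p6 : (2 * T - R) * F ≤ (2 * T - R) * (Dl t r - 1) :=
    mul_le_mul_of_nonneg_left hF1 (by omega)
  have p7 : 0 ≤ (T - R) * P := mul_nonneg (by omega) hP0
  have p8 : (T - R) * P ≤ (T - R) * (Dl t r - 1) := mul_le_mul_of_nonneg_left hP1 (by omega)
  have p9 : (R - T) * (Dl t r - 1) ≤ (R - T) * F := mul_le_mul_of_nonpos_left hF1 (by omega)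
  have p10 : (R - T) * F ≤ 0 := mul_nonpos_of_nonpos_of_nonneg (by omega) hF0
  have p11 : 0 ≤ T * P := mul_nonneg (by omega) hP0
  have p12 : T * P ≤ T * (Dl t r - 1) := mul_le_mul_of_nonneg_left hP1 (by omega)
  have q1 : T * (Dl t r - 1) + (2 * T - R) * (Dl t r - 1)
      = Dl t r * (3 * T - R) - (3 * T - R) := by ring
  have q2 : (2 * T - R) * (Dl t r - 1) + (T - R) * (Dl t r - 1)
      = Dl t r * (3 * T - 2 * R) - (3 * T - 2 * R) := by ring
  have q3 : (R - T) * (Dl t r - 1) = Dl t r * (R - T) - (R - T) := by ring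
  have q4 : T * (Dl t r - 1) = Dl t r * T - T := by ring
  refine ⟨?_, ?_, ?_, ?_, ?_, ?_⟩
  · have h : Dl t r * 0 ≤ Dl t r * a := by rw [mul_zero]; omega
    exact (mul_le_mul_iff_right₀ hDpos).mp h
  · have h : Dl t r * a < Dl t r * (3 * T - R) := by omega
    have := (mul_lt_mul_iff_right₀ hDpos).mp h
    omega
  · have h : Dl t r * 0 ≤ Dl t r * b := by rw [mul_zero]; omega
    exact (mul_le_mul_iff_right₀ hDpos).mp h
  · have h : Dl t r * b < Dl t r * (3 * T - 2 * R) := by omega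
    have := (mul_lt_mul_iff_right₀ hDpos).mp h
    omega
  · have h : Dl t r * (R - T) ≤ Dl t r * (a - b) := by omega
    have := (mul_le_mul_iff_right₀ hDpos).mp h
    omega
  · have h : Dl t r * (a - b) < Dl t r * T := by omega
    have := (mul_lt_mul_iff_right₀ hDpos).mp h
    omega

lemma dist00 (t r : ℕ) (u : ℤ × ℤ) :
    hexDist u (pm t r (X0 t r u) (Y0 t r u))
      = hd (u.1 - (pm t r (X0 t r u) (Y0 t r u)).1)
          (u.2 - (pm t r (X0 t r u) (Y0 t r u)).2) := hexDist_eq u _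

lemma dist10 (t r : ℕ) (u : ℤ × ℤ) :
    hexDist u (pm t r (X0 t r u + 1) (Y0 t r u))
      = hd (u.1 - (pm t r (X0 t r u) (Y0 t r u)).1 - t)
          (u.2 - (pm t r (X0 t r u) (Y0 t r u)).2 - (2 * t - r)) := by
  rw [hexDist_eq]
  congr 1
  · simp only [pm]; push_cast; ring
  · simp only [pm]; push_cast; ring

lemma dist01 (t r : ℕ) (u : ℤ × ℤ) :
    hexDist u (pm t r (X0 t r u) (Y0 t r u + 1))
      = hd (u.1 - (pm t r (X0 t r u) (Y0 t r u)).1 - (2 * t - r))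
          (u.2 - (pm t r (X0 t r u) (Y0 t r u)).2 - (t - r)) := by
  rw [hexDist_eq]
  congr 1
  · simp only [pm]; push_cast; ring
  · simp only [pm]; push_cast; ring

lemma dist11 (t r : ℕ) (u : ℤ × ℤ) :
    hexDist u (pm t r (X0 t r u + 1) (Y0 t r u + 1))
      = hd (u.1 - (pm t r (X0 t r u) (Y0 t r u)).1 - (3 * t - r))
          (u.2 - (pm t r (X0 t r u) (Y0 t r u)).2 - (3 * t - 2 * r)) := by
  rw [hexDist_eq]
  congr 1
  · simp only [pm]; push_cast; ring
  · simp only [pm]; push_cast; ring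

lemma pm_ne (t r : ℕ) (hr : 1 ≤ r) (hrt : r ≤ t) {x y x' y' : ℤ}
    (h : ¬ (x = x' ∧ y = y')) : pm t r x y ≠ pm t r x' y' :=
  fun he => h (pm_inj t r hr hrt he)

lemma not_in_box (t : ℕ) (u c : ℤ × ℤ) (hc : c ∉ ballBox t u) : t - hexDist u c = 0 := by
  rw [hexDist_eq]
  unfold hd
  simp [ballBox, Finset.mem_Icc, Prod.le_def] at hc
  omega

lemma reception_eq (t r : ℕ) (hr : 1 ≤ r) (hrt : r ≤ t) (u : ℤ × ℤ) :
    receptionSet (patternMirror t r) t u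
      = (t - hexDist u (pm t r (X0 t r u) (Y0 t r u)))
      + (t - hexDist u (pm t r (X0 t r u + 1) (Y0 t r u)))
      + (t - hexDist u (pm t r (X0 t r u) (Y0 t r u + 1)))
      + (t - hexDist u (pm t r (X0 t r u + 1) (Y0 t r u + 1))) := by
  classical
  have key : ∀ v ∈ ballBox t u, (if v ∈ patternMirror t r then t - hexDist u v else 0)
      = ((if v = pm t r (X0 t r u) (Y0 t r u)
            then t - hexDist u (pm t r (X0 t r u) (Y0 t r u)) else 0)
        + (if v = pm t r (X0 t r u + 1) (Y0 t r u)
            then t - hexDist u (pm t r (X0 t r u + 1) (Y0 t r u)) else 0)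
        + (if v = pm t r (X0 t r u) (Y0 t r u + 1)
            then t - hexDist u (pm t r (X0 t r u) (Y0 t r u + 1)) else 0)
        + (if v = pm t r (X0 t r u + 1) (Y0 t r u + 1)
            then t - hexDist u (pm t r (X0 t r u + 1) (Y0 t r u + 1)) else 0)) := by
    intro v _
    by_cases hvS : v ∈ patternMirror t r
    · rw [if_pos hvS]
      by_cases hlt : hexDist u v < t
      · rcases near_corner t r hr hrt u v hvS hlt with rfl | rfl | rfl | rfl
        · rw [if_pos rfl, if_neg (pm_ne t r hr hrt (by omega)),
            if_neg (pm_ne t r hr hrt (by omega)), if_neg (pm_ne t r hr hrt (by omega))]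
          omega
        · rw [if_pos rfl, if_neg (pm_ne t r hr hrt (by omega)),
            if_neg (pm_ne t r hr hrt (by omega)), if_neg (pm_ne t r hr hrt (by omega))]
          omega
        · rw [if_pos rfl, if_neg (pm_ne t r hr hrt (by omega)),
            if_neg (pm_ne t r hr hrt (by omega)), if_neg (pm_ne t r hr hrt (by omega))]
          omega
        · rw [if_pos rfl, if_neg (pm_ne t r hr hrt (by omega)),
            if_neg (pm_ne t r hr hrt (by omega)), if_neg (pm_ne t r hr hrt (by omega))]
          omega
      · push_neg at hlt
        have h0 : t - hexDist u v = 0 := by omega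
        have z : ∀ c : ℤ × ℤ, (if v = c then t - hexDist u c else 0) = 0 := by
          intro c
          split
          · next h => rw [← h]; omega
          · rfl
        rw [h0, z, z, z, z]
    · rw [if_neg hvS]
      have z : ∀ x' y' : ℤ,
          (if v = pm t r x' y' then t - hexDist u (pm t r x' y') else 0) = 0 := by
        intro x' y'
        split
        · next h => exact absurd (h ▸ pm_mem t r x' y') hvS
        · rfl
      rw [z, z, z, z]
  have hfin : ∀ c : ℤ × ℤ, (if c ∈ ballBox t u then t - hexDist u c else 0)
      = t - hexDist u c := by
    intro c
    split
    · rfl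
    · next h => exact (not_in_box t u c h).symm
  unfold receptionSet
  rw [Finset.sum_congr rfl key]
  rw [Finset.sum_add_distrib, Finset.sum_add_distrib, Finset.sum_add_distrib,
    Finset.sum_ite_eq' (ballBox t u), Finset.sum_ite_eq' (ballBox t u),
    Finset.sum_ite_eq' (ballBox t u), Finset.sum_ite_eq' (ballBox t u),
    hfin, hfin, hfin, hfin]

/-- Corollary 4.3: the mirror pattern
`[tx + (2t−r)y]α₁ + [(2t−r)x + (t−r)y]α₂` (`x, y ∈ ℤ`) is also an efficient
`(t,r)` broadcast dominating set of `T_∞`; it is the reflection of the pattern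
of Theorem 4.2 across the line through the origin and `α₁ + α₂` (which in
lattice coordinates is the swap of the two coordinates). -/
theorem patternMirror_is_efficient (t r : ℕ) (hr : 1 ≤ r) (hrt : r ≤ t) :
    IsEfficientBroadcast (patternMirror t r) t r ∧
    Prod.swap '' pattern t r = patternMirror t r := by
  constructor
  · refine ⟨?_, ?_, ?_⟩
    · intro u
      obtain ⟨b1, b2, b3, b4, b5, b6⟩ := coord_bounds t r hr hrt u
      have E := reception_eq t r hr hrt u
      rw [dist00, dist10, dist01, dist11] at E
      rw [E]
      exact (core_all t r _ _ hr hrt b1 b2 b3 b4 b5 b6).1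
    · intro u h
      obtain ⟨b1, b2, b3, b4, b5, b6⟩ := coord_bounds t r hr hrt u
      have E := reception_eq t r hr hrt u
      rw [dist00, dist10, dist01, dist11] at E
      have h00 := h _ (pm_mem t r (X0 t r u) (Y0 t r u))
      have h10 := h _ (pm_mem t r (X0 t r u + 1) (Y0 t r u))
      have h01 := h _ (pm_mem t r (X0 t r u) (Y0 t r u + 1))
      have h11 := h _ (pm_mem t r (X0 t r u + 1) (Y0 t r u + 1))
      rw [dist00] at h00
      rw [dist10] at h10
      rw [dist01] at h01
      rw [dist11] at h11
      rw [E]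
      exact (core_all t r _ _ hr hrt b1 b2 b3 b4 b5 b6).2.1 h00 h10 h01 h11
    · intro u v hvS hvlt
      obtain ⟨b1, b2, b3, b4, b5, b6⟩ := coord_bounds t r hr hrt u
      have E := reception_eq t r hr hrt u
      rw [dist00, dist10, dist01, dist11] at E
      have C := core_all t r _ _ hr hrt b1 b2 b3 b4 b5 b6
      have hvt : hexDist u v < t := by omega
      rcases near_corner t r hr hrt u v hvS hvt with rfl | rfl | rfl | rfl
      · rw [dist00] at hvlt
        obtain ⟨hs, o1, o2, o3⟩ := C.2.2.1 hvlt
        constructor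
        · rw [E, dist00]; exact hs
        · intro w hwS hwlt
          have hwt : hexDist u w < t := by omega
          rcases near_corner t r hr hrt u w hwS hwt with rfl | rfl | rfl | rfl
          · rfl
          · rw [dist10] at hwlt; omega
          · rw [dist01] at hwlt; omega
          · rw [dist11] at hwlt; omega
      · rw [dist10] at hvlt
        obtain ⟨hs, o1, o2, o3⟩ := C.2.2.2.1 hvlt
        constructor
        · rw [E, dist10]; exact hs
        · intro w hwS hwlt
          have hwt : hexDist u w < t := by omega
          rcases near_corner t r hr hrt u w hwS hwt with rfl | rfl | rfl | rfl
          · rw [dist00] at hwlt; omega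
          · rfl
          · rw [dist01] at hwlt; omega
          · rw [dist11] at hwlt; omega
      · rw [dist01] at hvlt
        obtain ⟨hs, o1, o2, o3⟩ := C.2.2.2.2.1 hvlt
        constructor
        · rw [E, dist01]; exact hs
        · intro w hwS hwlt
          have hwt : hexDist u w < t := by omega
          rcases near_corner t r hr hrt u w hwS hwt with rfl | rfl | rfl | rfl
          · rw [dist00] at hwlt; omega
          · rw [dist10] at hwlt; omega
          · rfl
          · rw [dist11] at hwlt; omega
      · rw [dist11] at hvlt
        obtain ⟨hs, o1, o2, o3⟩ := C.2.2.2.2.2 hvlt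
        constructor
        · rw [E, dist11]; exact hs
        · intro w hwS hwlt
          have hwt : hexDist u w < t := by omega
          rcases near_corner t r hr hrt u w hwS hwt with rfl | rfl | rfl | rfl
          · rw [dist00] at hwlt; omega
          · rw [dist10] at hwlt; omega
          · rw [dist01] at hwlt; omega
          · rfl
  · ext p
    constructor
    · rintro ⟨q, ⟨x, y, rfl⟩, rfl⟩
      exact ⟨x, y, rfl⟩
    · rintro ⟨x, y, rfl⟩
      exact ⟨((2 * (t : ℤ) - r) * x + ((t : ℤ) - r) * y,
              (t : ℤ) * x + (2 * (t : ℤ) - r) * y), ⟨x, y, rfl⟩, rfl⟩
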